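/- Let d ≥ 1, λ ∈ (0,1), and Λ* as in the LDP for the reflected RW_λ (Legendre transform of ln ψ). Then Λ*(x) = 0 if and only if x = ((1−λ)/(d(1+λ)),…,(1−λ)/(d(1+λ))). -/

import Mathlib

open Real Finset

-- quadratic exp bound
lemma expQuad {t : ℝ} (ht : |t| ≤ 1) : Real.exp t ≤ 1 + t + t ^ 2 := by
  have h := Real.exp_bound ht (n := 2) (by norm_num)
  have h2 : |Real.exp t - (1 + t)| ≤ |t| ^ 2 * (3 / (2 * 2)) := by
    convert h using 2
    norm_num [Finset.sum_range_succ]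
    norm_num [Nat.factorial, Nat.succ_eq_add_one]
  have := (abs_sub_le_iff.1 h2).1
  have hsq : |t| ^ 2 = t ^ 2 := sq_abs t
  nlinarith [sq_nonneg t]



open scoped Classical in
/-- The function ψ from the LDP for the reflected biased random walk. -/
noncomputable def psi (d : ℕ) (lam : ℝ) (s : Fin d → ℝ) : ℝ :=
  ((Finset.univ.filter (fun i => s i < (1 / 2) * Real.log lam)).card : ℝ) *
      (2 * Real.sqrt lam / (1 + lam)) / d
    + (1 / (d * (1 + lam))) *
      ∑ i, (lam * Real.exp (-(s i)) + Real.exp (s i)) *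
        (if (1 / 2) * Real.log lam ≤ s i then 1 else 0)

open scoped Classical in
lemma psi_eq (d : ℕ) (lam : ℝ) (s : Fin d → ℝ) :
    psi d lam s = ∑ i, (if s i < (1 / 2) * Real.log lam
      then 2 * Real.sqrt lam / (1 + lam) / d
      else (lam * Real.exp (-(s i)) + Real.exp (s i)) / (d * (1 + lam))) := by
  unfold psi
  rw [Finset.natCast_card_filter, Finset.sum_mul, Finset.sum_div, Finset.mul_sum,
    ← Finset.sum_add_distrib]
  refine Finset.sum_congr rfl fun i _ => ?_
  by_cases h : s i < (1 / 2) * Real.log lam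
  · rw [if_pos h, if_pos h, if_neg (not_le.mpr h)]
    ring
  · rw [if_neg h, if_neg h, if_pos (not_lt.mp h)]
    ring

lemma expIneq {lam : ℝ} (h0 : 0 < lam) (h1 : lam < 1) (t : ℝ) :
    (1 + lam) * Real.exp ((1 - lam) / (1 + lam) * t) ≤ lam * Real.exp (-t) + Real.exp t := by
  have hl : (0:ℝ) < 1 + lam := by linarith
  have ha : (0:ℝ) ≤ lam / (1 + lam) := by positivity
  have hb : (0:ℝ) ≤ 1 / (1 + lam) := by positivity
  have hab : lam / (1 + lam) + 1 / (1 + lam) = 1 := by field_simp; ring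
  have := convexOn_exp.2 (Set.mem_univ (-t)) (Set.mem_univ t) ha hb hab
  simp only [smul_eq_mul] at this
  have he : lam / (1 + lam) * (-t) + 1 / (1 + lam) * t = (1 - lam) / (1 + lam) * t := by
    field_simp
    ring
  rw [he] at this
  have := mul_le_mul_of_nonneg_left this (le_of_lt hl)
  calc (1 + lam) * Real.exp ((1 - lam) / (1 + lam) * t)
      ≤ (1 + lam) * (lam / (1 + lam) * Real.exp (-t) + 1 / (1 + lam) * Real.exp t) := this
    _ = lam * Real.exp (-t) + Real.exp t := by field_simp

lemma gs0 {lam : ℝ} (h0 : 0 < lam) :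
    lam * Real.exp (-((1 / 2) * Real.log lam)) + Real.exp ((1 / 2) * Real.log lam)
      = 2 * Real.sqrt lam := by
  have hs : Real.exp ((1 / 2) * Real.log lam) = Real.sqrt lam := by
    rw [Real.sqrt_eq_rpow, Real.rpow_def_of_pos h0, mul_comm]
  have hsq : Real.sqrt lam * Real.sqrt lam = lam := Real.mul_self_sqrt h0.le
  have hspos : 0 < Real.sqrt lam := Real.sqrt_pos.mpr h0
  rw [Real.exp_neg, hs]
  field_simp
  nlinarith [hsq, Real.sq_sqrt h0.le]

lemma psi_lower {d : ℕ} (hd : 1 ≤ d) {lam : ℝ} (h0 : 0 < lam) (h1 : lam < 1) (s : Fin d → ℝ) :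
    Real.exp ((1 - lam) / (d * (1 + lam)) * ∑ i, s i) ≤ psi d lam s := by
  classical
  have hl : (0:ℝ) < 1 + lam := by linarith
  have hd0 : (0:ℝ) < d := by exact_mod_cast hd
  set c : ℝ := (1 - lam) / (1 + lam) with hc
  have hc0 : 0 ≤ c := div_nonneg (by linarith) hl.le
  -- per coordinate bound
  have coord : ∀ t : ℝ, Real.exp (c * t) / d ≤
      (if t < (1 / 2) * Real.log lam
        then 2 * Real.sqrt lam / (1 + lam) / d
        else (lam * Real.exp (-t) + Real.exp t) / (d * (1 + lam))) := by
    intro t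
    by_cases h : t < (1 / 2) * Real.log lam
    · rw [if_pos h]
      have h2 : Real.exp (c * t) ≤ Real.exp (c * ((1 / 2) * Real.log lam)) :=
        Real.exp_le_exp.mpr (mul_le_mul_of_nonneg_left h.le hc0)
      have h3 := (expIneq h0 h1 ((1 / 2) * Real.log lam)).trans_eq (gs0 h0)
      have h4 : (1 + lam) * Real.exp (c * t) ≤ 2 * Real.sqrt lam := by
        calc (1 + lam) * Real.exp (c * t) ≤ (1 + lam) * Real.exp (c * ((1/2) * Real.log lam)) :=
              mul_le_mul_of_nonneg_left h2 hl.le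
          _ ≤ 2 * Real.sqrt lam := h3
      rw [div_div, le_div_iff₀ (by positivity)]
      calc Real.exp (c * t) / d * ((1 + lam) * d)
          = ((1 + lam) * Real.exp (c * t)) * (d / d) := by ring
        _ = (1 + lam) * Real.exp (c * t) := by rw [div_self hd0.ne']; ring
        _ ≤ 2 * Real.sqrt lam := h4
    · rw [if_neg h]
      have h4 := expIneq h0 h1 t
      rw [le_div_iff₀ (by positivity)]
      calc Real.exp (c * t) / d * (d * (1 + lam))
          = ((1 + lam) * Real.exp (c * t)) * (d / d) := by ring
        _ = (1 + lam) * Real.exp (c * t) := by rw [div_self hd0.ne']; ring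
        _ ≤ lam * Real.exp (-t) + Real.exp t := h4
  -- Jensen
  have hw : ∀ i ∈ (Finset.univ : Finset (Fin d)), (0:ℝ) ≤ 1 / d := fun _ _ => by positivity
  have hw1 : ∑ _i : Fin d, (1:ℝ) / d = 1 := by
    rw [Finset.sum_const, Finset.card_univ, Fintype.card_fin, nsmul_eq_mul]
    field_simp
  have jensen := convexOn_exp.map_sum_le (w := fun _ => (1:ℝ)/d) (p := fun i => c * s i)
    hw hw1 (fun i _ => Set.mem_univ _)
  simp only [smul_eq_mul] at jensen
  have harg : ∑ i : Fin d, (1:ℝ)/d * (c * s i) = (1 - lam) / (d * (1 + lam)) * ∑ i, s i := by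
    have hre : ∀ i : Fin d, (1:ℝ)/d * (c * s i) = ((1:ℝ)/d * c) * s i := fun i => by ring
    simp only [hre]
    have hmm : (1:ℝ)/d * ((1-lam)/(1+lam)) = (1-lam)/(d*(1+lam)) := by
      rw [div_mul_div_comm, one_mul]
    rw [← Finset.mul_sum, hc, hmm]
  rw [harg] at jensen
  refine jensen.trans ?_
  rw [psi_eq]
  refine Finset.sum_le_sum fun i _ => ?_
  calc (1:ℝ)/d * Real.exp (c * s i) = Real.exp (c * s i) / d := by ring
    _ ≤ _ := coord (s i)

lemma psi_pos {d : ℕ} (hd : 1 ≤ d) {lam : ℝ} (h0 : 0 < lam) (h1 : lam < 1) (s : Fin d → ℝ) :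
    0 < psi d lam s := lt_of_lt_of_le (Real.exp_pos _) (psi_lower hd h0 h1 s)

lemma psi_zero {d : ℕ} (hd : 1 ≤ d) {lam : ℝ} (h0 : 0 < lam) (h1 : lam < 1) :
    psi d lam (fun _ => 0) = 1 := by
  have hl : (0:ℝ) < 1 + lam := by linarith
  have hd0 : (0:ℝ) < d := by exact_mod_cast hd
  have hs0 : (1 / 2) * Real.log lam < 0 := by
    have := Real.log_neg h0 h1
    linarith
  rw [psi_eq]
  simp only [neg_zero, Real.exp_zero, mul_one, if_neg (lt_asymm hs0)]
  rw [Finset.sum_const, Finset.card_univ, Fintype.card_fin, nsmul_eq_mul]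
  field_simp
  ring

lemma psi_single {d : ℕ} (hd : 1 ≤ d) {lam : ℝ} (h0 : 0 < lam) (h1 : lam < 1)
    (i : Fin d) {t : ℝ} (ht : (1 / 2) * Real.log lam ≤ t) :
    psi d lam (fun j => if j = i then t else 0)
      = 1 + (lam * Real.exp (-t) + Real.exp t - (1 + lam)) / (d * (1 + lam)) := by
  classical
  have hl : (0:ℝ) < 1 + lam := by linarith
  have hd0 : (0:ℝ) < d := by exact_mod_cast hd
  have hs0 : (1 / 2) * Real.log lam < 0 := by
    have := Real.log_neg h0 h1
    linarith
  rw [psi_eq]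
  have key : ∀ j : Fin d,
      (if ((fun j => if j = i then t else 0) j) < (1 / 2) * Real.log lam
        then 2 * Real.sqrt lam / (1 + lam) / d
        else (lam * Real.exp (-((fun j => if j = i then t else 0) j))
          + Real.exp ((fun j => if j = i then t else 0) j)) / (d * (1 + lam)))
      = (if j = i then (lam * Real.exp (-t) + Real.exp t) / (d * (1 + lam))
          else (lam + 1) / (d * (1 + lam))) := by
    intro j
    by_cases hj : j = i
    · subst hj
      simp only [eq_self_iff_true, if_true]
      rw [if_neg (not_lt.mpr ht)]
    · simp only [if_neg hj]
      rw [if_neg (lt_asymm hs0), neg_zero, Real.exp_zero, mul_one]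
  simp only [key]
  rw [← Finset.add_sum_erase _ _ (Finset.mem_univ i), if_pos rfl]
  have herase : ∑ j ∈ Finset.univ.erase i,
      (if j = i then (lam * Real.exp (-t) + Real.exp t) / (d * (1 + lam))
        else (lam + 1) / (d * (1 + lam)))
      = (d - 1 : ℝ) * ((lam + 1) / (d * (1 + lam))) := by
    rw [Finset.sum_congr rfl (fun j hj => if_neg (Finset.ne_of_mem_erase hj))]
    rw [Finset.sum_const, Finset.card_erase_of_mem (Finset.mem_univ i),
      Finset.card_univ, Fintype.card_fin, nsmul_eq_mul, Nat.cast_sub hd, Nat.cast_one]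
  rw [herase]
  field_simp
  ring

lemma coord_eq {d : ℕ} (hd : 1 ≤ d) {lam : ℝ} (h0 : 0 < lam) (h1 : lam < 1)
    {x : Fin d → ℝ}
    (H : ∀ s : Fin d → ℝ, (∑ j, s j * x j) - Real.log (psi d lam s) ≤ 0)
    (i : Fin d) : x i = (1 - lam) / (d * (1 + lam)) := by
  classical
  have hl : (0:ℝ) < 1 + lam := by linarith
  have hd0 : (0:ℝ) < d := by exact_mod_cast hd
  have hs0 : (1 / 2) * Real.log lam < 0 := by
    have := Real.log_neg h0 h1
    linarith
  set δ : ℝ := min 1 (-((1 / 2) * Real.log lam)) with hδ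
  have hδ0 : 0 < δ := lt_min one_pos (by linarith)
  -- main pointwise bound
  have main : ∀ t : ℝ, |t| ≤ δ →
      t * (x i * (d * (1 + lam))) ≤ (1 - lam) * t + (1 + lam) * t ^ 2 := by
    intro t htd
    have ht1 : |t| ≤ 1 := htd.trans (min_le_left _ _)
    have hts0 : (1 / 2) * Real.log lam ≤ t := by
      have := (abs_le.mp htd).1
      have := min_le_right (1:ℝ) (-((1 / 2) * Real.log lam))
      linarith
    have hsum : (∑ j, (fun j => if j = i then t else 0) j * x j) = t * x i := by
      rw [Finset.sum_eq_single_of_mem i (Finset.mem_univ i)]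
      · simp
      · intro j _ hj
        simp [if_neg hj]
    have hlog := H (fun j => if j = i then t else 0)
    rw [hsum, psi_single hd h0 h1 i hts0] at hlog
    have hpos : (0:ℝ) < 1 + (lam * Real.exp (-t) + Real.exp t - (1 + lam)) / (d * (1 + lam)) := by
      rw [← psi_single hd h0 h1 i hts0]
      exact psi_pos hd h0 h1 _
    have hlog2 : t * x i ≤ (lam * Real.exp (-t) + Real.exp t - (1 + lam)) / (d * (1 + lam)) := by
      have := Real.log_le_sub_one_of_pos hpos
      linarith
    have hquad : lam * Real.exp (-t) + Real.exp t - (1 + lam)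
        ≤ (1 - lam) * t + (1 + lam) * t ^ 2 := by
      have e1 : Real.exp t ≤ 1 + t + t ^ 2 := expQuad ht1
      have e2 : Real.exp (-t) ≤ 1 + (-t) + (-t) ^ 2 := expQuad (by rwa [abs_neg])
      nlinarith [h0.le]
    have := mul_le_mul_of_nonneg_right hlog2 (le_of_lt (by positivity : (0:ℝ) < d * (1 + lam)))
    rw [div_mul_cancel₀ _ (by positivity : (d * (1 + lam)) ≠ 0)] at this
    calc t * (x i * (d * (1 + lam))) = t * x i * (d * (1 + lam)) := by ring
      _ ≤ lam * Real.exp (-t) + Real.exp t - (1 + lam) := this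
      _ ≤ (1 - lam) * t + (1 + lam) * t ^ 2 := hquad
  set A : ℝ := x i * (d * (1 + lam)) with hA
  have hAle : A ≤ 1 - lam := by
    refine le_of_forall_pos_le_add fun ε hε => ?_
    set t : ℝ := min δ (ε / (1 + lam)) with htdef
    have ht0 : 0 < t := lt_min hδ0 (by positivity)
    have h2 := main t (by rw [abs_of_pos ht0]; exact min_le_left _ _)
    have h3 : (1 + lam) * t ≤ ε := by
      have : t ≤ ε / (1 + lam) := min_le_right _ _
      calc (1 + lam) * t ≤ (1 + lam) * (ε / (1 + lam)) :=
            mul_le_mul_of_nonneg_left this hl.le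
        _ = ε := by field_simp
    have h4 : A * t ≤ ((1 - lam) + ε) * t := by nlinarith
    exact le_of_mul_le_mul_right h4 ht0
  have hAge : 1 - lam ≤ A := by
    refine le_of_forall_pos_le_add fun ε hε => ?_
    set u : ℝ := min δ (ε / (1 + lam)) with hu
    have hu0 : 0 < u := lt_min hδ0 (by positivity)
    have h2 := main (-u) (by rw [abs_neg, abs_of_pos hu0]; exact min_le_left _ _)
    have h3 : (1 + lam) * u ≤ ε := by
      have : u ≤ ε / (1 + lam) := min_le_right _ _
      calc (1 + lam) * u ≤ (1 + lam) * (ε / (1 + lam)) :=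
            mul_le_mul_of_nonneg_left this hl.le
        _ = ε := by field_simp
    have h4 : ((1 - lam) - ε) * u ≤ A * u := by nlinarith
    have h5 := le_of_mul_le_mul_right h4 hu0
    linarith
  have hAeq : A = 1 - lam := le_antisymm hAle hAge
  have h6 : x i * (d * (1 + lam)) = 1 - lam := by rw [← hA]; exact hAeq
  rw [eq_div_iff (by positivity : (d:ℝ) * (1 + lam) ≠ 0)]
  exact h6

theorem stmt19 (d : ℕ) (hd : 1 ≤ d) (lam : ℝ) (h0 : 0 < lam) (h1 : lam < 1)
    (x : Fin d → ℝ) :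
    (⨆ s : Fin d → ℝ,
      ((∑ i, s i * x i - Real.log (psi d lam s) : ℝ) : EReal)) = 0 ↔
      x = fun _ => (1 - lam) / (d * (1 + lam)) := by
  constructor
  · intro h
    have H : ∀ s : Fin d → ℝ, (∑ j, s j * x j) - Real.log (psi d lam s) ≤ 0 := by
      intro s
      have h2 : (((∑ i, s i * x i - Real.log (psi d lam s) : ℝ)) : EReal) ≤ (0 : EReal) := by
        rw [← h]
        exact le_iSup (fun s : Fin d → ℝ =>
          ((∑ i, s i * x i - Real.log (psi d lam s) : ℝ) : EReal)) s
      exact_mod_cast h2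
    funext i
    exact coord_eq hd h0 h1 H i
  · intro hx
    subst hx
    refine le_antisymm (iSup_le fun s => ?_) ?_
    · have key : (∑ i, s i * ((1 - lam) / (d * (1 + lam)))) - Real.log (psi d lam s) ≤ 0 := by
        rw [sub_nonpos, Real.le_log_iff_exp_le (psi_pos hd h0 h1 s)]
        have harg : (∑ i, s i * ((1 - lam) / (d * (1 + lam))))
            = (1 - lam) / (d * (1 + lam)) * ∑ i, s i := by
          rw [← Finset.sum_mul]
          ring
        rw [harg]
        exact psi_lower hd h0 h1 s
      exact_mod_cast key
    · have h0' : (((∑ i : Fin d, (fun _ : Fin d => (0:ℝ)) i * ((1 - lam) / (d * (1 + lam))))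
          - Real.log (psi d lam (fun _ => 0)) : ℝ) : EReal) = 0 := by
        rw [psi_zero hd h0 h1]
        simp
      calc (0:EReal) = _ := h0'.symm
        _ ≤ _ := le_iSup (fun s : Fin d → ℝ =>
            ((∑ i, s i * ((fun _ : Fin d => (1 - lam) / (d * (1 + lam))) i)
              - Real.log (psi d lam s) : ℝ) : EReal)) (fun _ => (0:ℝ))
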